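/- Let (Ω, μ) be a finite measure space with μ(Ω) > 0, let g : (−1,1) → ℝ be nondecreasing, and let s₀, m₁, m₂ ∈ (−1,1) satisfy m₁ ≤ s₀ ≤ m₂ and g(s₀) = 0. Let φ : Ω → ℝ be measurable with φ(x) ∈ (−1,1) for a.e. x, such that φ and g∘φ are integrable, and set c := (1/μ(Ω)) ∫_Ω φ dμ. Assume m₁ < c < m₂ and define η := min{c − m₁, m₂ − c}, κ := max{c − m₁, m₂ − c}, M := sup_{s ∈ [m₁,m₂]} |g(s)|, and ḡ := (1/μ(Ω)) ∫_Ω g(φ) dμ. Then η ∫_Ω |g(φ(x))| dμ(x) ≤ ∫_Ω (φ(x) − c)·(g(φ(x)) − ḡ) dμ(x) + (η + κ)·μ(Ω)·M. -/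

import Mathlib

open MeasureTheory Set

/-- Kenmochi–Niezgódka–Pawłow type estimate: for a nondecreasing `g` on `(-1,1)` vanishing
at `s₀`, and `φ` with values in `(-1,1)` whose mean `c` satisfies `m₁ < c < m₂`, one has
`η ∫ |g(φ)| ≤ ∫ (φ - c)(g(φ) - ḡ) + (η + κ) μ(Ω) M`. -/
theorem stmt_11 {Ω : Type*} [MeasurableSpace Ω] (μ : Measure Ω) [IsFiniteMeasure μ]
    (hμ : 0 < μ Set.univ)
    (g : ℝ → ℝ) (hg : MonotoneOn g (Ioo (-1 : ℝ) 1))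
    (s₀ m₁ m₂ : ℝ) (hs₀ : s₀ ∈ Ioo (-1 : ℝ) 1) (hm₁ : m₁ ∈ Ioo (-1 : ℝ) 1)
    (hm₂ : m₂ ∈ Ioo (-1 : ℝ) 1) (hm₁s₀ : m₁ ≤ s₀) (hs₀m₂ : s₀ ≤ m₂) (hgs₀ : g s₀ = 0)
    (φ : Ω → ℝ) (hφmeas : Measurable φ) (hφrange : ∀ᵐ x ∂μ, φ x ∈ Ioo (-1 : ℝ) 1)
    (hφint : Integrable φ μ) (hgφint : Integrable (fun x => g (φ x)) μ)
    (c η κ M gbar : ℝ)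
    (hc : c = ((μ Set.univ).toReal)⁻¹ * ∫ x, φ x ∂μ)
    (hcm : m₁ < c ∧ c < m₂)
    (hη : η = min (c - m₁) (m₂ - c)) (hκ : κ = max (c - m₁) (m₂ - c))
    (hM : M = sSup ((fun s => |g s|) '' Icc m₁ m₂))
    (hgbar : gbar = ((μ Set.univ).toReal)⁻¹ * ∫ x, g (φ x) ∂μ) :
    η * ∫ x, |g (φ x)| ∂μ
      ≤ (∫ x, (φ x - c) * (g (φ x) - gbar) ∂μ) + (η + κ) * (μ Set.univ).toReal * M := by
  obtain ⟨hm₁c, hcm₂⟩ := hcm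
  have hμR0 : 0 < (μ Set.univ).toReal := ENNReal.toReal_pos hμ.ne' (measure_ne_top μ _)
  have hIcc : Icc m₁ m₂ ⊆ Ioo (-1:ℝ) 1 := fun s hs =>
    ⟨lt_of_lt_of_le hm₁.1 hs.1, lt_of_le_of_lt hs.2 hm₂.2⟩
  have hbdd : BddAbove ((fun s => |g s|) '' Icc m₁ m₂) := by
    refine ⟨max |g m₁| |g m₂|, ?_⟩
    rintro y ⟨s, hs, rfl⟩
    exact abs_le_max_abs_abs (hg hm₁ (hIcc hs) hs.1) (hg (hIcc hs) hm₂ hs.2)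
  have hM0 : 0 ≤ M := by
    rw [hM]
    have hmem : |g s₀| ∈ (fun s => |g s|) '' Icc m₁ m₂ := ⟨s₀, ⟨hm₁s₀, hs₀m₂⟩, rfl⟩
    have := le_csSup hbdd hmem
    simpa [hgs₀] using this
  have hη0 : 0 < η := by rw [hη]; exact lt_min (by linarith) (by linarith)
  have hκ0 : 0 < κ := lt_of_lt_of_le hη0 (by rw [hη, hκ]; exact min_le_max)
  have hηm₂ : η ≤ m₂ - c := hη ▸ min_le_right _ _
  have hηm₁ : η ≤ c - m₁ := hη ▸ min_le_left _ _
  have hκm₂ : m₂ - c ≤ κ := hκ ▸ le_max_right _ _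
  have hκm₁ : c - m₁ ≤ κ := hκ ▸ le_max_left _ _
  -- pointwise estimate
  have hpt : ∀ᵐ x ∂μ, η * |g (φ x)| ≤ (φ x - c) * g (φ x) + (η + κ) * M := by
    filter_upwards [hφrange] with x hx
    rcases le_or_gt m₂ (φ x) with h2 | h2
    · have hg0 : g s₀ ≤ g m₂ := hg hs₀ hm₂ hs₀m₂
      have hg1 : g m₂ ≤ g (φ x) := hg hm₂ hx h2
      have hg2 : 0 ≤ g (φ x) := by rw [hgs₀] at hg0; linarith
      rw [abs_of_nonneg hg2]
      nlinarith
    rcases le_or_gt (φ x) m₁ with h1 | h1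
    · have hg0 : g m₁ ≤ g s₀ := hg hm₁ hs₀ hm₁s₀
      have hg1 : g (φ x) ≤ g m₁ := hg hx hm₁ h1
      have hg2 : g (φ x) ≤ 0 := by rw [hgs₀] at hg0; linarith
      rw [abs_of_nonpos hg2]
      nlinarith
    · have hmem : φ x ∈ Icc m₁ m₂ := ⟨h1.le, h2.le⟩
      have hgM : |g (φ x)| ≤ M := hM ▸ le_csSup hbdd ⟨φ x, hmem, rfl⟩
      have habs : |φ x - c| ≤ κ := abs_le.2 ⟨by linarith, by linarith⟩
      have hb : |(φ x - c) * g (φ x)| ≤ κ * M := by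
        rw [abs_mul]
        exact mul_le_mul habs hgM (abs_nonneg _) (le_trans (abs_nonneg _) habs)
      have h3 : -(κ * M) ≤ (φ x - c) * g (φ x) := neg_le_of_abs_le hb
      nlinarith [abs_nonneg (g (φ x))]
  -- integrability
  have habsint : Integrable (fun x => |g (φ x)|) μ := hgφint.abs
  have hint1 : Integrable (fun x => (φ x - c) * g (φ x)) μ := by
    refine Integrable.mono' (habsint.const_mul (1 + |c|))
      ((hφint.aestronglyMeasurable.sub aestronglyMeasurable_const).mul
        hgφint.aestronglyMeasurable) ?_
    filter_upwards [hφrange] with x hx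
    have h1 : |φ x| ≤ 1 := le_of_lt (abs_lt.2 ⟨hx.1, hx.2⟩)
    have h2 : |φ x - c| ≤ 1 + |c| := (abs_sub _ _).trans (by linarith)
    calc ‖(φ x - c) * g (φ x)‖ = |φ x - c| * |g (φ x)| := abs_mul _ _
      _ ≤ (1 + |c|) * |g (φ x)| := mul_le_mul_of_nonneg_right h2 (abs_nonneg _)
  have hint2 : Integrable (fun x => (φ x - c) * gbar) μ :=
    (hφint.sub (integrable_const c)).mul_const gbar
  have hmean : ∫ x, (φ x - c) ∂μ = 0 := by
    rw [integral_sub hφint (integrable_const c), integral_const, hc, smul_eq_mul, measureReal_def]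
    field_simp
    ring
  have key : ∫ x, (φ x - c) * (g (φ x) - gbar) ∂μ = ∫ x, (φ x - c) * g (φ x) ∂μ := by
    have hfun : (fun x => (φ x - c) * (g (φ x) - gbar))
        = fun x => (φ x - c) * g (φ x) - (φ x - c) * gbar := by
      funext x; ring
    rw [hfun, integral_sub hint1 hint2, integral_mul_const, hmean, zero_mul, sub_zero]
  have hintRHS : Integrable (fun x => (φ x - c) * g (φ x) + (η + κ) * M) μ :=
    hint1.add (integrable_const _)
  have hmono := integral_mono_ae (habsint.const_mul η) hintRHS hpt
  rw [integral_add hint1 (integrable_const _), integral_const, smul_eq_mul, measureReal_def,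
    integral_const_mul] at hmono
  rw [key]
  nlinarith [hmono]
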